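/- The series Σ_{n≥1} n · φ²_{n,0} · (2/27)^n converges and its sum equals 3/8; explicitly, Σ_{n≥1} n · (2^{n+1}(3n)! / (n!(2n+2)!)) · (2/27)^n = 3/8. (Equivalently, since Z²_0 = Σ_n φ²_{n,0}(2/27)^n = 9/8, the expected number of internal vertices of a free type II triangulation of a 2-gon is 1/3.) -/

import Mathlib

/-- The number of rooted type II triangulations of a 2-gon with n internal
vertices: φ²_{n,0} = 2^{n+1}(3n)!/(n!(2n+2)!). -/
noncomputable def phi20 (n : ℕ) : ℝ :=
  (2 ^ (n + 1) * Nat.factorial (3 * n) : ℝ) /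
    (Nat.factorial n * Nat.factorial (2 * n + 2))

def raney : ℕ → ℕ → ℕ
  | 0, _ => 1
  | _+1, 0 => 0
  | n+1, r+1 => raney (n+1) r + raney n (r+3)

lemma raney_zero (r : ℕ) : raney 0 r = 1 := by cases r <;> simp [raney]

lemma raney_succ_zero (n : ℕ) : raney (n+1) 0 = 0 := by simp [raney]

lemma raney_rec (n r : ℕ) : raney (n+1) (r+1) = raney (n+1) r + raney n (r+3) := by
  simp [raney]

open Finset in
lemma raney_conv (s : ℕ) : ∀ n r : ℕ,
    (∑ k ∈ range (n+1), raney k r * raney (n-k) s) = raney n (r+s) := by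
  intro n
  induction n using Nat.strong_induction_on with
  | _ n ihn =>
  intro r
  induction r with
  | zero =>
    rw [Finset.sum_eq_single 0]
    · simp [raney_zero]
    · intro b _ hb
      obtain ⟨b, rfl⟩ := Nat.exists_eq_succ_of_ne_zero hb
      simp [raney_succ_zero]
    · simp
  | succ r ihr =>
    cases n with
    | zero => simp [raney_zero]
    | succ m =>
      have hA : (∑ i ∈ range (m+1), raney (i+1) r * raney (m-i) s) + raney (m+1) s
          = raney (m+1) (r+s) := by
        rw [Finset.sum_range_succ'] at ihr
        simpa [raney_zero, Nat.succ_sub_succ] using ihr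
      have hB : (∑ i ∈ range (m+1), raney i (r+3) * raney (m-i) s) = raney m (r+3+s) :=
        ihn m (Nat.lt_succ_self m) (r+3)
      rw [Finset.sum_range_succ']
      simp only [raney_rec, Nat.succ_sub_succ, add_mul, Nat.sub_zero, raney_zero, one_mul]
      rw [Finset.sum_add_distrib]
      rw [hB, add_right_comm, hA]
      rw [show r+3+s = r+s+3 by ring, ← raney_rec, show r+s+1 = r+1+s by ring]

lemma raney_closed : ∀ n r : ℕ, (3*n + r) * raney n r = r * Nat.choose (3*n + r) n := by
  intro n
  induction n with
  | zero => intro r; simp [raney_zero]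
  | succ n ihn =>
    intro r
    induction r with
    | zero => simp [raney_succ_zero]
    | succ r ihr =>
      have e1 := ihr
      have e2 := ihn (r+3)
      rw [show 3*(n+1)+r = 3*n+r+3 by ring] at e1
      rw [show 3*n+(r+3) = 3*n+r+3 by ring] at e2
      have e3 := Nat.choose_succ_right_eq (3*n+r+3) n
      rw [show (3*n+r+3) - n = 2*n+r+3 by omega] at e3
      rw [show 3*(n+1)+(r+1) = 3*n+r+4 by ring, raney_rec]
      have hpas : Nat.choose (3*n+r+4) (n+1)
          = Nat.choose (3*n+r+3) n + Nat.choose (3*n+r+3) (n+1) :=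
        Nat.choose_succ_succ (3*n+r+3) n
      have key : ((3*(n:ℚ)+r+3)*((n:ℚ)+1)) * (((3*(n:ℚ)+r+4)) * ((raney (n+1) r : ℚ) + (raney n (r+3) : ℚ))) =
          ((3*(n:ℚ)+r+3)*((n:ℚ)+1)) * (((r:ℚ)+1) * (Nat.choose (3*n+r+4) (n+1) : ℚ)) := by
        have E1 : (3*(n:ℚ)+r+3) * (raney (n+1) r : ℚ)
            = (r : ℚ) * (Nat.choose (3*n+r+3) (n+1) : ℚ) := by exact_mod_cast e1
        have E2 : (3*(n:ℚ)+r+3) * (raney n (r+3) : ℚ)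
            = ((r:ℚ)+3) * (Nat.choose (3*n+r+3) n : ℚ) := by exact_mod_cast e2
        have E3 : (Nat.choose (3*n+r+3) (n+1) : ℚ) * ((n:ℚ)+1)
            = (Nat.choose (3*n+r+3) n : ℚ) * (2*(n:ℚ)+(r:ℚ)+3) := by exact_mod_cast e3
        rw [hpas]
        push_cast
        linear_combination ((3*(n:ℚ)+r+4)*((n:ℚ)+1)) * E1 + ((3*(n:ℚ)+r+4)*((n:ℚ)+1)) * E2 + ((r:ℚ) - (3*(n:ℚ)+r+3)) * E3
      have hne : ((3*(n:ℚ)+r+3)*((n:ℚ)+1)) ≠ 0 := by positivity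
      have key2 := mul_left_cancel₀ hne key
      exact_mod_cast key2

open Nat

noncomputable def wseq (n : ℕ) : ℝ := (1/2) * (Nat.choose (3*n+2) (n+1)) * (4/27)^n

lemma key_id (n : ℕ) (r : ℝ)
    (hr : ((3*n+4 : ℕ) : ℝ) * r = (Nat.choose (3*n+4) (n+1) : ℝ)) :
    ((n+1 : ℕ) : ℝ) * phi20 (n+1) * (2/27)^(n+1)
      = (wseq n - wseq (n+1)) - (5/4) * r * (4/27)^(n+1) := by
  have fne : ∀ m : ℕ, ((m ! : ℕ) : ℝ) ≠ 0 := fun m => by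
    exact_mod_cast (Nat.factorial_pos m).ne'
  have c1 : (Nat.choose (3*n+2) (n+1) : ℝ) = ((3*n+2)! : ℝ) / (((n+1)! : ℝ) * ((2*n+1)! : ℝ)) := by
    rw [Nat.cast_choose ℝ (by omega : n+1 ≤ 3*n+2), show (3*n+2) - (n+1) = 2*n+1 by omega]
  have c2 : (Nat.choose (3*n+5) (n+2) : ℝ) = ((3*n+5)! : ℝ) / (((n+2)! : ℝ) * ((2*n+3)! : ℝ)) := by
    rw [Nat.cast_choose ℝ (by omega : n+2 ≤ 3*n+5), show (3*n+5) - (n+2) = 2*n+3 by omega]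
  have c3 : (Nat.choose (3*n+4) (n+1) : ℝ) = ((3*n+4)! : ℝ) / (((n+1)! : ℝ) * ((2*n+3)! : ℝ)) := by
    rw [Nat.cast_choose ℝ (by omega : n+1 ≤ 3*n+4), show (3*n+4) - (n+1) = 2*n+3 by omega]
  have f1 : ((3*n+5)! : ℝ) = ((3*n+5) : ℝ) * ((3*n+4) : ℝ) * ((3*n+3) : ℝ) * ((3*n+2)! : ℝ) := by
    rw [show 3*n+5 = (3*n+4)+1 from rfl, Nat.factorial_succ,
        show 3*n+4 = (3*n+3)+1 from rfl, Nat.factorial_succ,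
        show 3*n+3 = (3*n+2)+1 from rfl, Nat.factorial_succ]
    push_cast; ring
  have f2 : ((3*n+4)! : ℝ) = ((3*n+4) : ℝ) * ((3*n+3) : ℝ) * ((3*n+2)! : ℝ) := by
    rw [show 3*n+4 = (3*n+3)+1 from rfl, Nat.factorial_succ,
        show 3*n+3 = (3*n+2)+1 from rfl, Nat.factorial_succ]
    push_cast; ring
  have f3 : ((3*n+3)! : ℝ) = ((3*n+3) : ℝ) * ((3*n+2)! : ℝ) := by
    rw [show 3*n+3 = (3*n+2)+1 from rfl, Nat.factorial_succ]; push_cast; ring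
  have f4 : ((2*n+4)! : ℝ) = ((2*n+4) : ℝ) * ((2*n+3) : ℝ) * ((2*n+2) : ℝ) * ((2*n+1)! : ℝ) := by
    rw [show 2*n+4 = (2*n+3)+1 from rfl, Nat.factorial_succ,
        show 2*n+3 = (2*n+2)+1 from rfl, Nat.factorial_succ,
        show 2*n+2 = (2*n+1)+1 from rfl, Nat.factorial_succ]
    push_cast; ring
  have f5 : ((2*n+3)! : ℝ) = ((2*n+3) : ℝ) * ((2*n+2) : ℝ) * ((2*n+1)! : ℝ) := by
    rw [show 2*n+3 = (2*n+2)+1 from rfl, Nat.factorial_succ,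
        show 2*n+2 = (2*n+1)+1 from rfl, Nat.factorial_succ]
    push_cast; ring
  have f6 : ((n+2)! : ℝ) = ((n+2) : ℝ) * ((n+1)! : ℝ) := by
    rw [show n+2 = (n+1)+1 from rfl, Nat.factorial_succ]; push_cast; ring
  have h34 : ((3*n+4 : ℕ) : ℝ) ≠ 0 := by push_cast; positivity
  have hr'' : r = (Nat.choose (3*n+4) (n+1) : ℝ) / ((3*n+4 : ℕ) : ℝ) := by
    rw [eq_div_iff h34, mul_comm]; exact hr
  unfold phi20 wseq
  rw [show 3*(n+1) = 3*n+3 from by ring, show 2*(n+1)+2 = 2*n+4 from by ring,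
      show 3*n+3+2 = 3*n+5 from by ring, show (n+1)+1 = n+2 from rfl]
  rw [hr'', c1, c2, c3, f1, f2, f3, f4, f5, f6]
  have hp : (4/27 : ℝ)^(n+1) = (4/27) * (4/27)^n := by rw [pow_succ]; ring
  have hp2 : (2/27 : ℝ)^(n+1) = (2/27) * (2/27)^n := by rw [pow_succ]; ring
  have hp3 : (2:ℝ)^(n+2) = 2 * 2 * 2^n := by rw [pow_succ, pow_succ]; ring
  have hp4 : (4/27 : ℝ)^n = 2^n * (2/27)^n := by
    rw [div_pow, div_pow, ← mul_div_assoc, ← mul_pow]; norm_num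
  rw [hp, hp2, hp3, hp4]
  push_cast
  field_simp
  ring

lemma wseq_nonneg (n : ℕ) : 0 ≤ wseq n := by unfold wseq; positivity

lemma wseq_zero : wseq 0 = 1 := by simp [wseq]

lemma wseq_ratio (n : ℕ) :
    wseq (n+1) * (9*((n:ℝ)+2)*(2*(n:ℝ)+3)) = wseq n * (2*(3*(n:ℝ)+4)*(3*(n:ℝ)+5)) := by
  have c1 : (Nat.choose (3*n+2) (n+1) : ℝ) = ((3*n+2)! : ℝ) / (((n+1)! : ℝ) * ((2*n+1)! : ℝ)) := by
    rw [Nat.cast_choose ℝ (by omega : n+1 ≤ 3*n+2), show (3*n+2) - (n+1) = 2*n+1 by omega]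
  have c2 : (Nat.choose (3*n+5) (n+2) : ℝ) = ((3*n+5)! : ℝ) / (((n+2)! : ℝ) * ((2*n+3)! : ℝ)) := by
    rw [Nat.cast_choose ℝ (by omega : n+2 ≤ 3*n+5), show (3*n+5) - (n+2) = 2*n+3 by omega]
  have f1 : ((3*n+5)! : ℝ) = ((3*n+5) : ℝ) * ((3*n+4) : ℝ) * ((3*n+3) : ℝ) * ((3*n+2)! : ℝ) := by
    rw [show 3*n+5 = (3*n+4)+1 from rfl, Nat.factorial_succ,
        show 3*n+4 = (3*n+3)+1 from rfl, Nat.factorial_succ,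
        show 3*n+3 = (3*n+2)+1 from rfl, Nat.factorial_succ]
    push_cast; ring
  have f5 : ((2*n+3)! : ℝ) = ((2*n+3) : ℝ) * ((2*n+2) : ℝ) * ((2*n+1)! : ℝ) := by
    rw [show 2*n+3 = (2*n+2)+1 from rfl, Nat.factorial_succ,
        show 2*n+2 = (2*n+1)+1 from rfl, Nat.factorial_succ]
    push_cast; ring
  have f6 : ((n+2)! : ℝ) = ((n+2) : ℝ) * ((n+1)! : ℝ) := by
    rw [show n+2 = (n+1)+1 from rfl, Nat.factorial_succ]; push_cast; ring
  unfold wseq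
  rw [show 3*(n+1)+2 = 3*n+5 from by ring, show (n+1)+1 = n+2 from rfl]
  rw [c1, c2, f1, f5, f6]
  have hp : (4/27 : ℝ)^(n+1) = (4/27) * (4/27)^n := by rw [pow_succ]; ring
  rw [hp]
  have h1 : (((n+1)! : ℕ) : ℝ) ≠ 0 := by exact_mod_cast (Nat.factorial_pos _).ne'
  have h2 : (((2*n+1)! : ℕ) : ℝ) ≠ 0 := by exact_mod_cast (Nat.factorial_pos _).ne'
  field_simp
  ring

lemma wseq_sq_bound : ∀ n : ℕ, wseq n ^ 2 * ((n:ℝ)+2) ≤ 2 := by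
  intro n
  induction n with
  | zero => rw [wseq_zero]; norm_num
  | succ n ih =>
    have hrat := wseq_ratio n
    have hsq : wseq (n+1)^2 * (9*((n:ℝ)+2)*(2*(n:ℝ)+3))^2
        = wseq n ^2 * (2*(3*(n:ℝ)+4)*(3*(n:ℝ)+5))^2 := by
      linear_combination (wseq (n+1) * (9*((n:ℝ)+2)*(2*(n:ℝ)+3)) + wseq n * (2*(3*(n:ℝ)+4)*(3*(n:ℝ)+5))) * hrat
    have hw2 : (0:ℝ) ≤ wseq n ^ 2 := sq_nonneg _
    have hn : (0:ℝ) ≤ (n:ℝ) := Nat.cast_nonneg n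
    have hineq : (2*(3*(n:ℝ)+4)*(3*(n:ℝ)+5))^2 * (((n:ℝ)+1)+2)
        ≤ (9*((n:ℝ)+2)*(2*(n:ℝ)+3))^2 * ((n:ℝ)+2) := by
      nlinarith [hn, mul_nonneg hn hn, mul_nonneg (mul_nonneg hn hn) hn]
    have h5 : wseq (n+1)^2 * (((n:ℝ)+1)+2) * (9*((n:ℝ)+2)*(2*(n:ℝ)+3))^2
        = wseq n ^2 * ((2*(3*(n:ℝ)+4)*(3*(n:ℝ)+5))^2 * (((n:ℝ)+1)+2)) := by
      linear_combination (((n:ℝ)+1)+2) * hsq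
    have h6 : wseq n ^2 * ((2*(3*(n:ℝ)+4)*(3*(n:ℝ)+5))^2 * (((n:ℝ)+1)+2))
        ≤ wseq n ^2 * ((9*((n:ℝ)+2)*(2*(n:ℝ)+3))^2 * ((n:ℝ)+2)) :=
      mul_le_mul_of_nonneg_left hineq hw2
    have h7 : wseq (n+1)^2 * (((n:ℝ)+1)+2) * (9*((n:ℝ)+2)*(2*(n:ℝ)+3))^2
        ≤ wseq n ^2 * ((n:ℝ)+2) * (9*((n:ℝ)+2)*(2*(n:ℝ)+3))^2 := by
      nlinarith [h5, h6]
    have hstep := le_of_mul_le_mul_right h7 (by positivity : (0:ℝ) < (9*((n:ℝ)+2)*(2*(n:ℝ)+3))^2)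
    have hcast : ((n+1:ℕ):ℝ)+2 = ((n:ℝ)+1)+2 := by push_cast; ring
    rw [hcast]
    exact hstep.trans ih

lemma wseq_tendsto_zero : Filter.Tendsto wseq Filter.atTop (nhds 0) := by
  have hb : ∀ n : ℕ, wseq n ≤ Real.sqrt (2 / ((n:ℝ)+2)) := by
    intro n
    have h1 : wseq n ^ 2 ≤ 2 / ((n:ℝ)+2) := by
      have := wseq_sq_bound n
      rw [le_div_iff₀ (by positivity)]
      linarith
    have := Real.sqrt_le_sqrt h1
    rwa [Real.sqrt_sq (wseq_nonneg n)] at this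
  have hA : Filter.Tendsto (fun n : ℕ => ((n:ℝ)+2)) Filter.atTop Filter.atTop :=
    Filter.tendsto_atTop_add_const_right _ 2 tendsto_natCast_atTop_atTop
  have h0 : Filter.Tendsto (fun n : ℕ => 2/((n:ℝ)+2)) Filter.atTop (nhds 0) :=
    Filter.Tendsto.div_atTop tendsto_const_nhds hA
  have hlim := (Real.continuous_sqrt.tendsto 0).comp h0
  rw [Real.sqrt_zero] at hlim
  exact squeeze_zero wseq_nonneg hb hlim

-- series definitions
noncomputable def gseq (n : ℕ) : ℝ := (raney n 1 : ℝ) * (4/27)^n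
noncomputable def g2seq (n : ℕ) : ℝ := (raney n 2 : ℝ) * (4/27)^n
noncomputable def g3seq (n : ℕ) : ℝ := (raney n 3 : ℝ) * (4/27)^n

lemma gseq_nonneg (n : ℕ) : 0 ≤ gseq n := by unfold gseq; positivity

lemma key_id' (n : ℕ) :
    ((n+1 : ℕ) : ℝ) * phi20 (n+1) * (2/27)^(n+1)
      = (wseq n - wseq (n+1)) - (5/4) * gseq (n+1) := by
  have hc := raney_closed (n+1) 1
  rw [show 3*(n+1)+1 = 3*n+4 by ring, one_mul] at hc
  have hr : ((3*n+4 : ℕ) : ℝ) * ((raney (n+1) 1 : ℕ) : ℝ) = (Nat.choose (3*n+4) (n+1) : ℝ) := by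
    exact_mod_cast congrArg (Nat.cast : ℕ → ℝ) hc
  have := key_id n ((raney (n+1) 1 : ℕ) : ℝ) hr
  rw [this]; unfold gseq; ring

lemma target_nonneg (n : ℕ) : 0 ≤ ((n : ℕ) : ℝ) * phi20 n * (2/27)^n := by
  unfold phi20; positivity

lemma wdiff_nonneg (n : ℕ) : 0 ≤ wseq n - wseq (n+1) := by
  have := key_id' n
  have h1 := target_nonneg (n+1)
  have h2 := gseq_nonneg (n+1)
  push_cast at h1 this
  nlinarith

lemma gseq_partial_le (N : ℕ) : ∑ n ∈ Finset.range N, gseq n ≤ 2 := by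
  cases N with
  | zero => simp
  | succ M =>
    rw [Finset.sum_range_succ']
    have h1 : ∀ m : ℕ, gseq (m+1) ≤ (4/5) * (wseq m - wseq (m+1)) := by
      intro m
      have := key_id' m
      have h1 := target_nonneg (m+1)
      push_cast at h1 this
      nlinarith
    have h2 : ∑ i ∈ Finset.range M, gseq (i+1) ≤ (4/5) * (wseq 0 - wseq M) := by
      calc ∑ i ∈ Finset.range M, gseq (i+1) ≤ ∑ i ∈ Finset.range M, (4/5) * (wseq i - wseq (i+1)) :=
            Finset.sum_le_sum (fun i _ => h1 i)
        _ = (4/5) * ∑ i ∈ Finset.range M, (wseq i - wseq (i+1)) := by rw [Finset.mul_sum]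
        _ = (4/5) * (wseq 0 - wseq M) := by rw [Finset.sum_range_sub']
    have h3 : gseq 0 = 1 := by simp [gseq, raney_zero]
    have h4 := wseq_nonneg M
    rw [h3, wseq_zero] at *
    linarith

lemma gseq_summable : Summable gseq :=
  summable_of_sum_range_le gseq_nonneg gseq_partial_le

open Finset in
lemma hasSum_gseq : HasSum gseq (3/2) := by
  have hs := gseq_summable
  set T : ℝ := ∑' n, gseq n with hT
  have hnorm : Summable (fun n => ‖gseq n‖) := by
    simpa [Real.norm_eq_abs, abs_of_nonneg (gseq_nonneg _)] using hs
  -- antidiagonal sums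
  have conv1 : ∀ n : ℕ, (∑ kl ∈ Finset.HasAntidiagonal.antidiagonal n, gseq kl.1 * gseq kl.2) = g2seq n := by
    intro n
    rw [Finset.Nat.sum_antidiagonal_eq_sum_range_succ_mk]
    unfold gseq g2seq
    rw [show (2 : ℕ) = 1 + 1 from rfl, ← raney_conv 1 n 1]
    push_cast
    rw [Finset.sum_mul]
    apply Finset.sum_congr rfl
    intro k hk
    have hk' : k ≤ n := Nat.lt_succ_iff.mp (Finset.mem_range.mp hk)
    have hpw : (4/27:ℝ)^k * (4/27:ℝ)^(n-k) = (4/27:ℝ)^n := by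
      rw [← pow_add, Nat.add_sub_cancel' hk']
    calc (raney k 1 : ℝ) * (4/27)^k * ((raney (n-k) 1 : ℝ) * (4/27)^(n-k))
        = (raney k 1 : ℝ) * (raney (n-k) 1 : ℝ) * ((4/27:ℝ)^k * (4/27:ℝ)^(n-k)) := by ring
      _ = (raney k 1 : ℝ) * (raney (n-k) 1 : ℝ) * (4/27)^n := by rw [hpw]
  have hg2norm : Summable (fun n => ‖g2seq n‖) := by
    have := summable_norm_sum_mul_antidiagonal_of_summable_norm hnorm hnorm
    simpa [conv1] using this
  have hg2 : Summable g2seq := hg2norm.of_norm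
  have ht2 : T * T = ∑' n, g2seq n := by
    rw [tsum_mul_tsum_eq_tsum_sum_antidiagonal_of_summable_norm hnorm hnorm]
    exact tsum_congr conv1
  have conv2 : ∀ n : ℕ, (∑ kl ∈ Finset.HasAntidiagonal.antidiagonal n, g2seq kl.1 * gseq kl.2) = g3seq n := by
    intro n
    rw [Finset.Nat.sum_antidiagonal_eq_sum_range_succ_mk]
    unfold gseq g2seq g3seq
    rw [show (3 : ℕ) = 2 + 1 from rfl, ← raney_conv 1 n 2]
    push_cast
    rw [Finset.sum_mul]
    apply Finset.sum_congr rfl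
    intro k hk
    have hk' : k ≤ n := Nat.lt_succ_iff.mp (Finset.mem_range.mp hk)
    have hpw : (4/27:ℝ)^k * (4/27:ℝ)^(n-k) = (4/27:ℝ)^n := by
      rw [← pow_add, Nat.add_sub_cancel' hk']
    calc (raney k 2 : ℝ) * (4/27)^k * ((raney (n-k) 1 : ℝ) * (4/27)^(n-k))
        = (raney k 2 : ℝ) * (raney (n-k) 1 : ℝ) * ((4/27:ℝ)^k * (4/27:ℝ)^(n-k)) := by ring
      _ = (raney k 2 : ℝ) * (raney (n-k) 1 : ℝ) * (4/27)^n := by rw [hpw]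
  have ht3 : T * T * T = ∑' n, g3seq n := by
    rw [ht2, tsum_mul_tsum_eq_tsum_sum_antidiagonal_of_summable_norm hg2norm hnorm]
    exact tsum_congr conv2
  -- shift identity
  have hshift : HasSum (fun n => gseq (n+1)) (T - 1) := by
    have h := (hasSum_nat_add_iff' (f := gseq) 1).mpr hs.hasSum
    have h1 : T - ∑ i ∈ Finset.range 1, gseq i = T - 1 := by
      simp [gseq, raney_zero]
    rwa [h1] at h
  have hlink : ∀ n : ℕ, gseq (n+1) = (4/27) * g3seq n := by
    intro n
    unfold gseq g3seq
    have : raney (n+1) 1 = raney n 3 := by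
      rw [show (1:ℕ) = 0 + 1 from rfl, raney_rec, raney_succ_zero]; simp
    rw [this, pow_succ]; ring
  have hg3 : HasSum g3seq ((T-1) * (27/4)) := by
    have h1 : HasSum (fun n => (4/27) * g3seq n) (T - 1) := by
      have := hshift
      simpa [hlink] using this
    have h2 := h1.mul_left (27/4)
    simp only [← mul_assoc] at h2
    norm_num at h2
    convert h2 using 1
    · rfl
    · ring
  have heq : T * T * T = (T - 1) * (27/4) := by rw [ht3, hg3.tsum_eq]
  have hTnn : 0 ≤ T := tsum_nonneg gseq_nonneg
  have hcubic : (2*T - 3)^2 * (T + 3) = 0 := by nlinarith [heq]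
  have hT32 : T = 3/2 := by
    rcases mul_eq_zero.mp hcubic with h | h
    · have := pow_eq_zero_iff (n := 2) (by norm_num) |>.mp h
      linarith
    · linarith
  rw [← hT32]
  exact hs.hasSum

lemma hasSum_wdiff : HasSum (fun n => wseq n - wseq (n+1)) 1 := by
  rw [hasSum_iff_tendsto_nat_of_nonneg wdiff_nonneg]
  have : ∀ N : ℕ, ∑ i ∈ Finset.range N, (wseq i - wseq (i+1)) = wseq 0 - wseq N := by
    intro N; exact Finset.sum_range_sub' wseq N
  simp only [this, wseq_zero]
  have := wseq_tendsto_zero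
  have h := Filter.Tendsto.const_sub (1:ℝ) this
  simpa using h

/-- Σ_{n≥1} n · φ²_{n,0} · (2/27)^n = 3/8.  (The n = 0 term of the
series below vanishes, so summing over all n ≥ 0 is the same as over n ≥ 1.) -/
theorem expected_size_two_gon :
    HasSum (fun n : ℕ => (n : ℝ) * phi20 n * (2 / 27 : ℝ) ^ n) (3 / 8) := by
  have hshift : HasSum (fun n => gseq (n+1)) (1/2) := by
    have h := (hasSum_nat_add_iff' (f := gseq) 1).mpr hasSum_gseq
    have h1 : (3:ℝ)/2 - ∑ i ∈ Finset.range 1, gseq i = 1/2 := by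
      simp [gseq, raney_zero]; norm_num
    rwa [h1] at h
  have hmain : HasSum (fun n : ℕ => ((n+1 : ℕ) : ℝ) * phi20 (n+1) * (2/27)^(n+1)) (3/8) := by
    have h1 : HasSum (fun n => (wseq n - wseq (n+1)) - (5/4) * gseq (n+1)) (1 - (5/4)*(1/2)) :=
      hasSum_wdiff.sub (hshift.mul_left (5/4))
    have h2 : (1 : ℝ) - (5/4)*(1/2) = 3/8 := by norm_num
    rw [h2] at h1
    convert h1 using 2 with n
    exact key_id' n
  refine (hasSum_nat_add_iff' (f := fun n : ℕ => (n : ℝ) * phi20 n * (2/27)^n) 1).mp ?_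
  convert hmain using 1
  · rfl
  · norm_num
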